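/- The real function g(x) = (2 + 2x − x²)/(2·√(4 − x²)) is strictly monotonically increasing on the interval [1, 2). In particular g(1) = √3/2, and for every x ∈ [1, 2) one has g(x) ≥ √3/2 with equality if and only if x = 1. -/

import Mathlib

lemma g_hasDerivAt (x : ℝ) (hx : x ∈ Set.Ioo (1:ℝ) 2) :
    HasDerivAt (fun x : ℝ => (2 + 2 * x - x ^ 2) / (2 * Real.sqrt (4 - x ^ 2)))
      ((8 - 6*x + x^3) / (2 * (4 - x^2) * Real.sqrt (4 - x^2))) x := by
  obtain ⟨h1, h2⟩ := hx
  have hu : (0:ℝ) < 4 - x^2 := by nlinarith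
  have hs : 0 < Real.sqrt (4 - x^2) := Real.sqrt_pos.mpr hu
  have hsq : Real.sqrt (4 - x^2) ^ 2 = 4 - x^2 := Real.sq_sqrt hu.le
  have hu' : HasDerivAt (fun x : ℝ => 4 - x^2) (-(2*x)) x := by
    have := ((hasDerivAt_pow 2 x).const_sub 4)
    simpa using this
  have hsqrt : HasDerivAt (fun x : ℝ => Real.sqrt (4 - x^2))
      (1 / (2 * Real.sqrt (4 - x^2)) * -(2*x)) x := by
    simpa [Function.comp_def] using (Real.hasDerivAt_sqrt hu.ne').comp x hu'
  have hd : HasDerivAt (fun x : ℝ => 2 * Real.sqrt (4 - x^2))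
      (2 * (1 / (2 * Real.sqrt (4 - x^2)) * -(2*x))) x := hsqrt.const_mul 2
  have hn : HasDerivAt (fun x : ℝ => 2 + 2 * x - x ^ 2) (2 - 2*x) x := by
    have := ((hasDerivAt_id x).const_mul 2).const_add 2 |>.sub (hasDerivAt_pow 2 x)
    simpa [Pi.sub_def] using this
  have hne : 2 * Real.sqrt (4 - x^2) ≠ 0 := by positivity
  have := hn.div hd hne
  refine this.congr_deriv ?_
  field_simp
  linear_combination ((4 - x^2) * 2 * (1 - x) - (8 - 6*x + x^3)) * hsq

theorem strictMonoOn_circum_add_inradius :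
    StrictMonoOn (fun x : ℝ => (2 + 2 * x - x ^ 2) / (2 * Real.sqrt (4 - x ^ 2)))
      (Set.Ico (1 : ℝ) 2) ∧
    (2 + 2 * (1 : ℝ) - (1 : ℝ) ^ 2) / (2 * Real.sqrt (4 - (1 : ℝ) ^ 2)) = Real.sqrt 3 / 2 ∧
    ∀ x ∈ Set.Ico (1 : ℝ) 2,
      Real.sqrt 3 / 2 ≤ (2 + 2 * x - x ^ 2) / (2 * Real.sqrt (4 - x ^ 2)) ∧
      ((2 + 2 * x - x ^ 2) / (2 * Real.sqrt (4 - x ^ 2)) = Real.sqrt 3 / 2 ↔ x = 1) := by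
  set g := fun x : ℝ => (2 + 2 * x - x ^ 2) / (2 * Real.sqrt (4 - x ^ 2)) with hg
  have hcont : ContinuousOn g (Set.Ico (1:ℝ) 2) := by
    apply ContinuousOn.div
    · fun_prop
    · fun_prop
    · intro x hx
      have hu : (0:ℝ) < 4 - x^2 := by nlinarith [hx.1, hx.2]
      have hs : 0 < Real.sqrt (4 - x^2) := Real.sqrt_pos.mpr hu
      positivity
  have hmono : StrictMonoOn g (Set.Ico (1:ℝ) 2) := by
    apply StrictMonoOn.mono (s := Set.Ico (1:ℝ) 2)
    · exact strictMonoOn_of_deriv_pos (convex_Ico 1 2) hcont (by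
        intro x hx
        rw [interior_Ico] at hx
        rw [(g_hasDerivAt x hx).deriv]
        have h1 := hx.1; have h2 := hx.2
        have hu : (0:ℝ) < 4 - x^2 := by nlinarith
        have hs : 0 < Real.sqrt (4 - x^2) := Real.sqrt_pos.mpr hu
        have hnum : 0 < 8 - 6*x + x^3 := by nlinarith [sq_nonneg (x-1), sq_nonneg (2-x)]
        positivity)
    · exact le_refl _
  have hs3 : Real.sqrt 3 * Real.sqrt 3 = 3 := Real.mul_self_sqrt (by norm_num)
  have hs3pos : 0 < Real.sqrt 3 := Real.sqrt_pos.mpr (by norm_num)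
  have hg1 : g 1 = Real.sqrt 3 / 2 := by
    show (2 + 2 * (1:ℝ) - 1 ^ 2) / (2 * Real.sqrt (4 - 1 ^ 2)) = Real.sqrt 3 / 2
    norm_num
    rw [div_eq_div_iff (by positivity) (by norm_num)]
    nlinarith
  refine ⟨hmono, hg1, fun x hx => ?_⟩
  have h1 : (1:ℝ) ∈ Set.Ico (1:ℝ) 2 := by norm_num
  constructor
  · rcases eq_or_lt_of_le hx.1 with h | h
    · rw [← hg1, ← h]
    · exact le_of_lt (hg1 ▸ hmono h1 hx h)
  · constructor
    · intro heq
      by_contra hne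
      have h : 1 < x := lt_of_le_of_ne hx.1 (Ne.symm hne)
      have := hmono h1 hx h
      rw [hg1] at this
      exact absurd heq (ne_of_gt this)
    · intro h; rw [h]; exact hg1
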